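/- Assume r < γ and I ≥ K e^{γt}. Then V₄(S,I,t) = S + I − K e^{γt}; i.e., every state (S,I,t) with I ≥ K e^{γt} belongs to the redemption region, and immediate redemption is optimal there. -/

import Mathlib

open MeasureTheory ProbabilityTheory Real Set

noncomputable section

/-- `W` is a standard one-dimensional Brownian motion with respect to the
filtration `𝓕` under the probability measure `P`. -/
structure IsBrownianMotion {Ω : Type*} {mΩ : MeasurableSpace Ω} (P : Measure Ω)
    (𝓕 : Filtration ℝ mΩ) (W : ℝ → Ω → ℝ) : Prop where
  adapted : Adapted 𝓕 W
  indep_increments : ∀ s t : ℝ, 0 ≤ s → s ≤ t →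
    Indep (MeasurableSpace.comap (fun ω => W t ω - W s ω)
      (inferInstance : MeasurableSpace ℝ)) (𝓕 s) P
  gaussian_increments : ∀ s t : ℝ, 0 ≤ s → s ≤ t →
    P.map (fun ω => W t ω - W s ω) = gaussianReal 0 (t - s).toNNReal
  continuous_paths : ∀ ω, Continuous fun u => W u ω
  init : ∀ ω, W 0 ω = 0

variable {Ω : Type*} {mΩ : MeasurableSpace Ω}

/-- Risk-neutral stock price at time `u`, started at `S` at time `t`:
`S_u = S · exp((r−δ−σ²/2)(u−t) + σ(W_u − W_t))`. -/
def stockPrice (W : ℝ → Ω → ℝ) (r δ σ S t u : ℝ) (ω : Ω) : ℝ :=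
  S * Real.exp ((r - δ - σ ^ 2 / 2) * (u - t) + σ * (W u ω - W t ω))

/-- Dividend account `I_u = I e^{r(u−t)} + ∫_t^u δ e^{r(u−v)} S_v dv`. -/
def divAccount (W : ℝ → Ω → ℝ) (r δ σ S I t u : ℝ) (ω : Ω) : ℝ :=
  I * Real.exp (r * (u - t)) +
    ∫ v in t..u, δ * Real.exp (r * (u - v)) * stockPrice W r δ σ S t v ω

/-- Discounted expected payoff `E[e^{−r(τ−t)}(S_τ + I_τ − K e^{γτ})⁺]` for the
stopping rule `τ` (accumulated dividends returned to the borrower on redemption). -/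
def payoff4 (P : Measure Ω) (W : ℝ → Ω → ℝ) (r δ σ K γ S I t : ℝ) (τ : Ω → ℝ) : ℝ :=
  ∫ ω, Real.exp (-(r * (τ ω - t))) *
    max (stockPrice W r δ σ S t (τ ω) ω + divAccount W r δ σ S I t (τ ω) ω
      - K * Real.exp (γ * τ ω)) 0 ∂P

/-- Stock-loan value `V₄(S,I,t)` when accumulated dividends are returned to the
borrower on redemption. -/
def V4 (P : Measure Ω) (F : Filtration ℝ mΩ) (W : ℝ → Ω → ℝ)
    (r δ σ K γ T S I t : ℝ) : ℝ :=
  sSup {x | ∃ τ : Ω → ℝ, IsStoppingTime F (fun ω => (τ ω : WithTop ℝ)) ∧ (∀ ω, τ ω ∈ Set.Icc t T) ∧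
    x = payoff4 P W r δ σ K γ S I t τ}


section AuxSL
open scoped NNReal ENNReal

set_option linter.unusedSectionVars false in
lemma gauss_exp_aux (c : ℝ) (v : ℝ≥0) :
    Integrable (fun x => Real.exp (c * x)) (gaussianReal 0 v) ∧
      ∫ x, Real.exp (c * x) ∂(gaussianReal 0 v) = Real.exp (c ^ 2 * v / 2) := by
  by_cases hv : v = 0
  · subst hv
    rw [gaussianReal_zero_var]
    refine ⟨⟨(by fun_prop : Measurable fun x : ℝ => Real.exp (c * x)).aestronglyMeasurable, ?_⟩, ?_⟩
    · simp only [HasFiniteIntegral]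
      rw [lintegral_dirac' _ (by fun_prop)]
      exact ENNReal.coe_lt_top
    · rw [integral_dirac]
      simp
  · have hv' : (v:ℝ) ≠ 0 := by exact_mod_cast hv
    have hkey : ∀ x : ℝ, Real.exp (c * x) * gaussianPDFReal 0 v x
        = Real.exp (c ^ 2 * v / 2) * gaussianPDFReal (c * v) v x := by
      intro x
      unfold gaussianPDFReal
      rw [mul_comm (Real.exp (c*x)), mul_assoc, ← Real.exp_add, mul_left_comm, ← Real.exp_add]
      congr 1
      field_simp
      ring
    constructor
    · rw [gaussianReal_of_var_ne_zero _ hv,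
        integrable_withDensity_iff (measurable_gaussianPDF _ _)
          (ae_of_all _ fun x => ENNReal.ofReal_lt_top)]
      have : (fun x => Real.exp (c * x) * (gaussianPDF 0 v x).toReal)
          = fun x => Real.exp (c ^ 2 * v / 2) * gaussianPDFReal (c * v) v x := by
        funext x
        rw [gaussianPDF, ENNReal.toReal_ofReal (gaussianPDFReal_nonneg _ _ _), hkey]
      rw [this]
      exact (integrable_gaussianPDFReal _ _).const_mul _
    · rw [gaussianReal_of_var_ne_zero _ hv]
      have hd : gaussianPDF 0 v = fun x => ((gaussianPDFReal 0 v x).toNNReal : ℝ≥0∞) := rfl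
      rw [hd, integral_withDensity_eq_integral_smul
        ((measurable_gaussianPDFReal 0 v).real_toNNReal) _]
      have : (fun x => (gaussianPDFReal 0 v x).toNNReal • Real.exp (c * x))
          = fun x => Real.exp (c ^ 2 * v / 2) * gaussianPDFReal (c * v) v x := by
        funext x
        rw [NNReal.smul_def, Real.coe_toNNReal _ (gaussianPDFReal_nonneg _ _ _),
          smul_eq_mul, mul_comm, hkey]
      rw [this, integral_const_mul, integral_gaussianPDFReal_eq_one _ hv, mul_one]

lemma int_exp_decay_aux (δ : ℝ) {u v : ℝ} (huv : u ≤ v) :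
    (∫ s in u..v, δ * Real.exp (-(δ * (s - u)))) = 1 - Real.exp (-(δ * (v - u))) := by
  have hd : ∀ s ∈ uIcc u v, HasDerivAt (fun x => -Real.exp (-(δ * (x - u))))
      (δ * Real.exp (-(δ * (s - u)))) s := by
    intro s _
    have h1 : HasDerivAt (fun x : ℝ => -(δ * (x - u))) (-δ) s := by
      have h0 := (((hasDerivAt_id s).sub_const u).const_mul δ).neg
      rw [mul_one] at h0
      exact h0
    have h2 := h1.exp
    refine h2.neg.congr_deriv ?_
    ring
  have hcont : IntervalIntegrable (fun s => δ * Real.exp (-(δ * (s - u)))) volume u v :=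
    (by fun_prop : Continuous fun s : ℝ => δ * Real.exp (-(δ * (s - u)))).intervalIntegrable u v
  rw [intervalIntegral.integral_eq_sub_of_hasDerivAt hd hcont]
  simp
  ring

variable {Ω : Type*} {mΩ : MeasurableSpace Ω} {P : Measure Ω} [IsProbabilityMeasure P]
  {F : Filtration ℝ mΩ} {W : ℝ → Ω → ℝ}

set_option linter.unusedSectionVars false

/-- discounted stock price -/
def aDv (W : ℝ → Ω → ℝ) (δ σ S t v : ℝ) (ω : Ω) : ℝ :=
  S * Real.exp ((-δ - σ ^ 2 / 2) * (v - t) + σ * (W v ω - W t ω))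

lemma aDv_eq (r δ σ S t v : ℝ) (ω : Ω) :
    Real.exp (-(r * (v - t))) * stockPrice W r δ σ S t v ω = aDv W δ σ S t v ω := by
  rw [stockPrice, aDv, mul_left_comm, ← Real.exp_add]
  exact congrArg (S * Real.exp ·) (by ring)

lemma aDv_pos {S : ℝ} (hS : 0 < S) (δ σ t v : ℝ) (ω : Ω) : 0 < aDv W δ σ S t v ω :=
  mul_pos hS (Real.exp_pos _)

lemma aDv_self (δ σ S t : ℝ) (ω : Ω) : aDv W δ σ S t t ω = S := by
  simp [aDv]

lemma aDv_ratio (δ σ S t u v : ℝ) (ω : Ω) :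
    aDv W δ σ S t v ω = aDv W δ σ S t u ω *
      (Real.exp ((-δ - σ ^ 2 / 2) * (v - u)) * Real.exp (σ * (W v ω - W u ω))) := by
  rw [aDv, aDv, mul_assoc, ← Real.exp_add, ← Real.exp_add]
  exact congrArg (S * Real.exp ·) (by ring)

lemma meas_W (hW : IsBrownianMotion P F W) (u : ℝ) : Measurable (W u) :=
  (hW.adapted u).mono (F.le u) le_rfl

lemma meas_W_joint (hW : IsBrownianMotion P F W) :
    Measurable (Function.uncurry W) :=
  measurable_uncurry_of_continuous_of_measurable hW.continuous_paths (meas_W hW)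

lemma meas_aDv (hW : IsBrownianMotion P F W) (δ σ S t v : ℝ) :
    Measurable (aDv W δ σ S t v) := by
  have h1 := meas_W hW v
  have h2 := meas_W hW t
  unfold aDv
  fun_prop

lemma meas_aDv_joint (hW : IsBrownianMotion P F W) (δ σ S t : ℝ) :
    Measurable (fun p : ℝ × Ω => aDv W δ σ S t p.1 p.2) := by
  have h1 : Measurable fun p : ℝ × Ω => W p.1 p.2 := meas_W_joint hW
  have h2 := meas_W hW t
  have h3 : Measurable fun p : ℝ × Ω => W t p.2 := h2.comp measurable_snd
  unfold aDv
  fun_prop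

lemma exp_inc (hW : IsBrownianMotion P F W) {a b : ℝ} (ha : 0 ≤ a) (hab : a ≤ b) (c : ℝ) :
    Integrable (fun ω => Real.exp (c * (W b ω - W a ω))) P ∧
      ∫ ω, Real.exp (c * (W b ω - W a ω)) ∂P = Real.exp (c ^ 2 * (b - a) / 2) := by
  have hZ : Measurable fun ω => W b ω - W a ω := (meas_W hW b).sub (meas_W hW a)
  have hmap := hW.gaussian_increments a b ha hab
  have hg : AEStronglyMeasurable (fun x => Real.exp (c * x)) (P.map fun ω => W b ω - W a ω) :=
    (by fun_prop : Measurable fun x : ℝ => Real.exp (c * x)).aestronglyMeasurable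
  have h1 := gauss_exp_aux c (b - a).toNNReal
  constructor
  · exact (integrable_map_measure hg hZ.aemeasurable).mp (by rw [hmap]; exact h1.1)
  · have h2 : ∫ ω, Real.exp (c * (W b ω - W a ω)) ∂P
        = ∫ x, Real.exp (c * x) ∂(P.map fun ω => W b ω - W a ω) :=
      (integral_map hZ.aemeasurable hg).symm
    rw [h2, hmap, h1.2, Real.coe_toNNReal _ (sub_nonneg.2 hab)]

lemma aDv_integrable (hW : IsBrownianMotion P F W) {t v : ℝ} (ht : 0 ≤ t) (htv : t ≤ v)
    (δ σ S : ℝ) :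
    Integrable (aDv W δ σ S t v) P ∧
      ∫ ω, aDv W δ σ S t v ω ∂P = S * Real.exp (-(δ * (v - t))) := by
  have h := exp_inc hW ht htv σ
  have hfun : aDv W δ σ S t v = fun ω =>
      S * Real.exp ((-δ - σ ^ 2 / 2) * (v - t)) * Real.exp (σ * (W v ω - W t ω)) := by
    funext ω
    rw [aDv, mul_assoc, ← Real.exp_add]
  constructor
  · rw [hfun]; exact h.1.const_mul _
  · rw [hfun, integral_const_mul, h.2, mul_assoc, ← Real.exp_add]
    exact congrArg (S * Real.exp ·) (by ring)

lemma indep_aux (hW : IsBrownianMotion P F W) {u v : ℝ} (hu : 0 ≤ u) (huv : u ≤ v)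
    (c : ℝ) {H : Ω → ℝ} (hH : Measurable[F u] H) :
    IndepFun H (fun ω => Real.exp (c * (W v ω - W u ω))) P := by
  have h0 := hW.indep_increments u v hu huv
  rw [IndepFun_iff_Indep]
  have hG : Measurable[MeasurableSpace.comap (fun ω => W v ω - W u ω)
      (inferInstance : MeasurableSpace ℝ)] fun ω => Real.exp (c * (W v ω - W u ω)) := by
    have hZ : Measurable[MeasurableSpace.comap (fun ω => W v ω - W u ω)
        (inferInstance : MeasurableSpace ℝ)] fun ω => W v ω - W u ω :=
      Measurable.of_comap_le le_rfl
    exact (Real.measurable_exp.comp (measurable_id.const_mul c)).comp hZ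
  rw [Indep_iff] at h0 ⊢
  intro t1 t2 ht1 ht2
  rw [Set.inter_comm, h0 t2 t1 (hG.comap_le _ ht2), mul_comm]
  exact hH.comap_le _ ht1

lemma measF_aDv (hW : IsBrownianMotion P F W) {t u : ℝ} (htu : t ≤ u) (δ σ S : ℝ) :
    Measurable[F u] (aDv W δ σ S t u) := by
  have h1 : Measurable[F u] (W u) := hW.adapted u
  have h2 : Measurable[F u] (W t) := (hW.adapted t).mono (F.mono htu) le_rfl
  unfold aDv
  fun_prop

lemma one_step (hW : IsBrownianMotion P F W) {t u v : ℝ} (ht : 0 ≤ t) (htu : t ≤ u)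
    (huv : u ≤ v) (δ σ S : ℝ) {A : Set Ω} (hA : MeasurableSet[F u] A) :
    Integrable (A.indicator (aDv W δ σ S t v)) P ∧
      ∫ ω, A.indicator (aDv W δ σ S t v) ω ∂P
        = Real.exp (-(δ * (v - u))) * ∫ ω, A.indicator (aDv W δ σ S t u) ω ∂P := by
  have hAm : MeasurableSet A := F.le u _ hA
  have hint_u := (aDv_integrable hW ht htu δ σ S).1
  have hint_v := (aDv_integrable hW ht (htu.trans huv) δ σ S).1
  refine ⟨hint_v.indicator hAm, ?_⟩
  set c := Real.exp ((-δ - σ ^ 2 / 2) * (v - u)) with hc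
  have hpt : A.indicator (aDv W δ σ S t v)
      = fun ω => (A.indicator (aDv W δ σ S t u) ω * c) * Real.exp (σ * (W v ω - W u ω)) := by
    funext ω
    by_cases hω : ω ∈ A
    · rw [Set.indicator_of_mem hω, Set.indicator_of_mem hω, aDv_ratio δ σ S t u v ω, mul_assoc]
    · simp [Set.indicator_of_notMem hω]
  have hHm : Measurable[F u] fun ω => A.indicator (aDv W δ σ S t u) ω * c :=
    (((measF_aDv hW htu δ σ S).indicator hA).mul_const c)
  have hG := exp_inc hW (ht.trans htu) huv σ
  have hIndep := indep_aux hW (ht.trans htu) huv σ hHm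
  have hmul := hIndep.integral_mul_eq_mul_integral ((hint_u.indicator hAm).mul_const c).aestronglyMeasurable
    hG.1.aestronglyMeasurable
  have hsplit : (fun ω => A.indicator (aDv W δ σ S t u) ω * c * Real.exp (σ * (W v ω - W u ω)))
      = (fun ω => A.indicator (aDv W δ σ S t u) ω * c)
        * (fun ω => Real.exp (σ * (W v ω - W u ω))) := rfl
  rw [hpt, hsplit, hmul, hG.2, integral_mul_const]
  have hce : c * Real.exp (σ ^ 2 * (v - u) / 2) = Real.exp (-(δ * (v - u))) := by
    rw [hc, ← Real.exp_add]; exact congrArg Real.exp (by ring)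
  rw [mul_assoc, hce, mul_comm]

lemma meas_primitive (hW : IsBrownianMotion P F W) (δ σ S t : ℝ) {a b : ℝ} (hab : a ≤ b) :
    Measurable fun ω => ∫ s in a..b, δ * aDv W δ σ S t s ω := by
  have h : (fun ω => ∫ s in a..b, δ * aDv W δ σ S t s ω)
      = fun ω => ∫ s, δ * aDv W δ σ S t s ω ∂(volume.restrict (Ioc a b)) := by
    funext ω; rw [intervalIntegral.integral_of_le hab]
  rw [h]
  have hj : StronglyMeasurable (fun p : Ω × ℝ => δ * aDv W δ σ S t p.2 p.1) :=
    (((meas_aDv_joint hW δ σ S t).comp (measurable_snd.prodMk measurable_fst)).const_mul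
      δ).stronglyMeasurable
  exact hj.integral_prod_right'.measurable

lemma time_step (hW : IsBrownianMotion P F W) {t u v : ℝ} (ht : 0 ≤ t) (htu : t ≤ u)
    (huv : u ≤ v) (δ σ S : ℝ) (hδ : 0 ≤ δ) (hS : 0 < S) {A : Set Ω}
    (hA : MeasurableSet[F u] A) :
    Integrable (fun ω => A.indicator (fun ω' => ∫ s in u..v, δ * aDv W δ σ S t s ω') ω) P ∧
      ∫ ω, A.indicator (fun ω' => ∫ s in u..v, δ * aDv W δ σ S t s ω') ω ∂P
        = (1 - Real.exp (-(δ * (v - u)))) * ∫ ω, A.indicator (aDv W δ σ S t u) ω ∂P := by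
  have hAm : MeasurableSet A := F.le u _ hA
  set ν := volume.restrict (Ioc u v) with hν
  set f : Ω → ℝ → ℝ := fun ω s => A.indicator (fun ω' => δ * aDv W δ σ S t s ω') ω with hf
  set Cu := ∫ ω, A.indicator (aDv W δ σ S t u) ω ∂P with hCu
  have hrw : (fun ω => A.indicator (fun ω' => ∫ s in u..v, δ * aDv W δ σ S t s ω') ω)
      = fun ω => ∫ s, f ω s ∂ν := by
    funext ω
    by_cases hω : ω ∈ A
    · simp only [hf, Set.indicator_of_mem hω]
      rw [intervalIntegral.integral_of_le huv]
    · simp [hf, Set.indicator_of_notMem hω]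
  have huncur : Measurable (Function.uncurry f) := by
    have h1 : Function.uncurry f = fun p : Ω × ℝ =>
        (A.indicator (fun _ => (1:ℝ)) p.1) * (δ * aDv W δ σ S t p.2 p.1) := by
      funext p
      by_cases hp : p.1 ∈ A <;>
        simp [hf, Function.uncurry, Set.indicator_of_mem, Set.indicator_of_notMem, hp]
    rw [h1]
    exact ((measurable_one.indicator hAm).comp measurable_fst).mul
      (((meas_aDv_joint hW δ σ S t).comp (measurable_snd.prodMk measurable_fst)).const_mul δ)
  have hfs : ∀ s, u ≤ s → (fun ω => f ω s) = fun ω => δ * A.indicator (aDv W δ σ S t s) ω := by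
    intro s _
    funext ω
    by_cases hω : ω ∈ A <;>
      simp [hf, Set.indicator_of_mem, Set.indicator_of_notMem, hω]
  have hint_s : ∀ s ∈ Ioc u v, Integrable (fun ω => f ω s) P ∧
      ∫ ω, f ω s ∂P = δ * (Real.exp (-(δ * (s - u))) * Cu) := by
    intro s hs
    have h1 := one_step hW ht htu (le_of_lt hs.1) δ σ S hA
    rw [hfs s (le_of_lt hs.1)]
    refine ⟨h1.1.const_mul δ, ?_⟩
    rw [integral_const_mul, h1.2]
  have hprod : Integrable (Function.uncurry f) (P.prod ν) := by
    rw [integrable_prod_iff' huncur.aestronglyMeasurable]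
    constructor
    · filter_upwards [ae_restrict_mem measurableSet_Ioc] with s hs
      exact (hint_s s hs).1
    · have gcont : Continuous fun s : ℝ => δ * (Real.exp (-(δ * (s - u))) * Cu) := by fun_prop
      refine (gcont.integrableOn_Ioc).congr ?_
      rw [Filter.EventuallyEq, ae_restrict_iff' measurableSet_Ioc]
      refine ae_of_all _ fun s hs => ?_
      have hnn : ∀ ω, 0 ≤ f ω s := by
        intro ω
        rw [congrFun (hfs s (le_of_lt hs.1)) ω]
        exact mul_nonneg hδ
          (Set.indicator_nonneg (fun ω' _ => (aDv_pos hS δ σ t s ω').le) ω)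
      calc δ * (Real.exp (-(δ * (s - u))) * Cu) = ∫ ω, f ω s ∂P := ((hint_s s hs).2).symm
        _ = ∫ ω, ‖Function.uncurry f (ω, s)‖ ∂P := by
            refine integral_congr_ae (ae_of_all _ fun ω => ?_)
            show f ω s = ‖f ω s‖
            rw [Real.norm_of_nonneg (hnn ω)]
  constructor
  · rw [hrw]; exact hprod.integral_prod_left
  · rw [hrw]
    rw [MeasureTheory.integral_integral_swap hprod]
    have h2 : ∫ s, (∫ ω, f ω s ∂P) ∂ν
        = ∫ s in Ioc u v, δ * Real.exp (-(δ * (s - u))) * Cu := by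
      refine setIntegral_congr_fun measurableSet_Ioc fun s hs => ?_
      rw [(hint_s s hs).2, mul_assoc]
    rw [h2, integral_mul_const, ← intervalIntegral.integral_of_le huv, int_exp_decay_aux δ huv]

lemma key_bound (hW : IsBrownianMotion P F W) {t T : ℝ} (ht : 0 ≤ t) (htT : t ≤ T)
    (δ σ : ℝ) (hδ : 0 ≤ δ) {S : ℝ} (hS : 0 < S) {τ : Ω → ℝ}
    (hτ : IsStoppingTime F (fun ω => (τ ω : WithTop ℝ))) (hmem : ∀ ω, τ ω ∈ Set.Icc t T) :
    ∫⁻ ω, ENNReal.ofReal (aDv W δ σ S t (τ ω) ω + ∫ s in t..τ ω, δ * aDv W δ σ S t s ω) ∂P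
      ≤ ENNReal.ofReal S := by
  classical
  set step : ℕ → ℝ := fun n => (T - t) / (n + 1) with hstep
  have hstep_nonneg : ∀ n, 0 ≤ step n := fun n =>
    div_nonneg (sub_nonneg.2 htT) (by positivity)
  set g : ℕ → ℕ → ℝ := fun n j => t + j * step n with hg
  have hg_mono : ∀ n, ∀ {i j : ℕ}, i ≤ j → g n i ≤ g n j := by
    intro n i j hij
    exact add_le_add_right (mul_le_mul_of_nonneg_right (by exact_mod_cast hij)
      (hstep_nonneg n)) t
  have hgt : ∀ n j, t ≤ g n j := fun n j =>
    le_add_of_nonneg_right (mul_nonneg (Nat.cast_nonneg j) (hstep_nonneg n))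
  have hg_top : ∀ n, g n (n + 1) = T := by
    intro n
    have : ((n : ℝ) + 1) ≠ 0 := by positivity
    simp only [hg, hstep]
    push_cast
    field_simp
    ring
  have hg_succ : ∀ n j, g n (j + 1) = g n j + step n := by
    intro n j
    simp only [hg]
    push_cast
    ring
  have hex : ∀ n ω, ∃ j, τ ω ≤ g n j := fun n ω => ⟨n + 1, by rw [hg_top]; exact (hmem ω).2⟩
  set idx : ℕ → Ω → ℕ := fun n ω => Nat.find (hex n ω) with hidx
  have hidx_le : ∀ n ω, idx n ω ≤ n + 1 := fun n ω =>
    Nat.find_le (by rw [hg_top]; exact (hmem ω).2)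
  have hspec : ∀ n ω, τ ω ≤ g n (idx n ω) := fun n ω => Nat.find_spec (hex n ω)
  have hlt_iff : ∀ n ω j, g n j < τ ω ↔ j < idx n ω := by
    intro n ω j
    rw [← not_le, ← not_le]
    constructor
    · intro h1 h2
      exact h1 ((hspec n ω).trans (hg_mono n h2))
    · intro h1 h2
      exact h1 (Nat.find_le h2)
  set A : ℕ → ℕ → Set Ω := fun n j => {ω | g n j < τ ω} with hA
  have hAmeas : ∀ n j, MeasurableSet[F (g n j)] (A n j) := by
    intro n j
    have : A n j = {ω | τ ω ≤ g n j}ᶜ := by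
      ext ω; simp [hA, not_le]
    rw [this]
    have hτj := hτ (g n j)
    simp only [WithTop.coe_le_coe] at hτj
    exact hτj.compl
  have hAm : ∀ n j, MeasurableSet (A n j) := fun n j => F.le _ _ (hAmeas n j)
  set Zn : ℕ → Ω → ℝ := fun n ω => S + ∑ j ∈ Finset.range (n + 1),
      (A n j).indicator (fun ω' => aDv W δ σ S t (g n (j + 1)) ω'
        + (∫ s in g n j..g n (j + 1), δ * aDv W δ σ S t s ω')
        - aDv W δ σ S t (g n j) ω') ω with hZn
  have hI : ∀ n ω, Zn n ω = aDv W δ σ S t (g n (idx n ω)) ω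
      + ∫ s in t..g n (idx n ω), δ * aDv W δ σ S t s ω := by
    intro n ω
    have hc := hW.continuous_paths ω
    have hcont_s : ∀ a b : ℝ, IntervalIntegrable (fun s => δ * aDv W δ σ S t s ω) volume a b := by
      intro a b
      refine Continuous.intervalIntegrable ?_ a b
      unfold aDv
      fun_prop
    set h : ℕ → ℝ := fun j => aDv W δ σ S t (g n j) ω
      + ∫ s in t..g n j, δ * aDv W δ σ S t s ω with hh
    have hterm : ∀ j, (A n j).indicator (fun ω' => aDv W δ σ S t (g n (j + 1)) ω'
        + (∫ s in g n j..g n (j + 1), δ * aDv W δ σ S t s ω')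
        - aDv W δ σ S t (g n j) ω') ω = if j < idx n ω then h (j + 1) - h j else 0 := by
      intro j
      by_cases hj : ω ∈ A n j
      · have hjk : j < idx n ω := (hlt_iff n ω j).1 hj
        rw [Set.indicator_of_mem hj, if_pos hjk]
        have hch := intervalIntegral.integral_add_adjacent_intervals
          (hcont_s t (g n j)) (hcont_s (g n j) (g n (j + 1)))
        simp only [hh]
        rw [← hch]
        ring
      · rw [Set.indicator_of_notMem hj, if_neg]
        intro hjk
        exact hj ((hlt_iff n ω j).2 hjk)
    have hfil : Finset.filter (fun j => j < idx n ω) (Finset.range (n + 1))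
        = Finset.range (idx n ω) := by
      have := hidx_le n ω
      ext j
      simp only [Finset.mem_filter, Finset.mem_range]
      omega
    calc Zn n ω = S + ∑ j ∈ Finset.range (n + 1),
          (if j < idx n ω then h (j + 1) - h j else 0) := by
          rw [hZn]; exact congrArg (S + ·) (Finset.sum_congr rfl fun j _ => hterm j)
      _ = S + ∑ j ∈ Finset.range (idx n ω), (h (j + 1) - h j) := by
          rw [← Finset.sum_filter, hfil]
      _ = S + (h (idx n ω) - h 0) := by rw [Finset.sum_range_sub]
      _ = _ := by
          have h0 : h 0 = S := by
            simp only [hh]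
            have : g n 0 = t := by simp [hg]
            rw [this, aDv_self, intervalIntegral.integral_same, add_zero]
          rw [h0]; simp only [hh]; ring
  have hZmeas : ∀ n, Measurable (Zn n) := by
    intro n
    refine measurable_const.add (Finset.measurable_sum _ fun j _ => ?_)
    refine Measurable.indicator ?_ (hAm n j)
    exact ((meas_aDv hW δ σ S t (g n (j + 1))).add
      (meas_primitive hW δ σ S t (hg_mono n (Nat.le_succ j)))).sub
      (meas_aDv hW δ σ S t (g n j))
  have hZnn : ∀ n ω, 0 ≤ Zn n ω := by
    intro n ω
    rw [hI n ω]
    have h1 := aDv_pos (W := W) hS δ σ t (g n (idx n ω)) ω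
    have h2 : 0 ≤ ∫ s in t..g n (idx n ω), δ * aDv W δ σ S t s ω :=
      intervalIntegral.integral_nonneg (hgt n (idx n ω))
        (fun s _ => mul_nonneg hδ (aDv_pos (W := W) hS δ σ t s ω).le)
    linarith
  have hTerm_int : ∀ n j, Integrable ((A n j).indicator (fun ω' => aDv W δ σ S t (g n (j + 1)) ω'
        + (∫ s in g n j..g n (j + 1), δ * aDv W δ σ S t s ω')
        - aDv W δ σ S t (g n j) ω')) P ∧
      ∫ ω, (A n j).indicator (fun ω' => aDv W δ σ S t (g n (j + 1)) ω'
        + (∫ s in g n j..g n (j + 1), δ * aDv W δ σ S t s ω')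
        - aDv W δ σ S t (g n j) ω') ω ∂P = 0 := by
    intro n j
    have h1 := one_step hW ht (hgt n j) (hg_mono n (Nat.le_succ j)) δ σ S (hAmeas n j)
    have h2 := time_step hW ht (hgt n j) (hg_mono n (Nat.le_succ j)) δ σ S hδ hS (hAmeas n j)
    have h3 : Integrable ((A n j).indicator (aDv W δ σ S t (g n j))) P :=
      (aDv_integrable hW ht (hgt n j) δ σ S).1.indicator (hAm n j)
    have hsplit : (A n j).indicator (fun ω' => aDv W δ σ S t (g n (j + 1)) ω'
        + (∫ s in g n j..g n (j + 1), δ * aDv W δ σ S t s ω')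
        - aDv W δ σ S t (g n j) ω')
        = fun ω => (A n j).indicator (aDv W δ σ S t (g n (j + 1))) ω
          + (A n j).indicator (fun ω' => ∫ s in g n j..g n (j + 1), δ * aDv W δ σ S t s ω') ω
          - (A n j).indicator (aDv W δ σ S t (g n j)) ω := by
      funext ω
      by_cases hω : ω ∈ A n j <;>
        simp [Set.indicator_of_mem, Set.indicator_of_notMem, hω]
    have e12 : Integrable (fun ω => (A n j).indicator (aDv W δ σ S t (g n (j + 1))) ω
        + (A n j).indicator (fun ω' => ∫ s in g n j..g n (j + 1), δ * aDv W δ σ S t s ω') ω) P :=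
      h1.1.add h2.1
    rw [hsplit]
    refine ⟨e12.sub h3, ?_⟩
    rw [integral_sub e12 h3, integral_add h1.1 h2.1, h1.2, h2.2]
    ring
  have hZint : ∀ n, Integrable (Zn n) P := by
    intro n
    exact (integrable_const S).add (integrable_finset_sum _ fun j _ => (hTerm_int n j).1)
  have hZval : ∀ n, ∫ ω, Zn n ω ∂P = S := by
    intro n
    rw [hZn]
    rw [integral_add (integrable_const S) (integrable_finset_sum _ fun j _ => (hTerm_int n j).1),
      integral_finset_sum _ fun j _ => (hTerm_int n j).1]
    simp only [integral_const, probReal_univ, one_smul]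
    rw [Finset.sum_congr rfl fun j _ => (hTerm_int n j).2]
    simp
  have hconv : ∀ ω, Filter.Tendsto (fun n => Zn n ω) Filter.atTop
      (nhds (aDv W δ σ S t (τ ω) ω + ∫ s in t..τ ω, δ * aDv W δ σ S t s ω)) := by
    intro ω
    have hc := hW.continuous_paths ω
    have hcont_s : ∀ a b : ℝ, IntervalIntegrable (fun s => δ * aDv W δ σ S t s ω) volume a b := by
      intro a b
      refine Continuous.intervalIntegrable ?_ a b
      unfold aDv
      fun_prop
    have hΦ : Continuous fun u => aDv W δ σ S t u ω + ∫ s in t..u, δ * aDv W δ σ S t s ω := by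
      refine Continuous.add ?_ (intervalIntegral.continuous_primitive hcont_s t)
      unfold aDv
      fun_prop
    have hstep_to : Filter.Tendsto step Filter.atTop (nhds 0) := by
      refine Filter.Tendsto.div_atTop tendsto_const_nhds ?_
      exact Filter.tendsto_atTop_add_const_right _ 1 tendsto_natCast_atTop_atTop
    have hup : ∀ n, g n (idx n ω) ≤ τ ω + step n := by
      intro n
      rcases Nat.eq_zero_or_pos (idx n ω) with h0 | hpos
      · rw [h0]
        have : g n 0 = t := by simp [hg]
        rw [this]
        exact le_add_of_le_of_nonneg (hmem ω).1 (hstep_nonneg n)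
      · obtain ⟨j, hj⟩ := Nat.exists_eq_succ_of_ne_zero hpos.ne'
        rw [hj, hg_succ]
        have hlt : g n j < τ ω := (hlt_iff n ω j).2 (by omega)
        linarith
    have hgrid : Filter.Tendsto (fun n => g n (idx n ω)) Filter.atTop (nhds (τ ω)) := by
      refine tendsto_of_tendsto_of_tendsto_of_le_of_le
        (tendsto_const_nhds (x := τ ω)) ?_ (fun n => hspec n ω) hup
      simpa using tendsto_const_nhds.add hstep_to
    have := (hΦ.tendsto (τ ω)).comp hgrid
    refine this.congr fun n => ?_
    exact (hI n ω).symm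
  calc ∫⁻ ω, ENNReal.ofReal (aDv W δ σ S t (τ ω) ω + ∫ s in t..τ ω, δ * aDv W δ σ S t s ω) ∂P
      = ∫⁻ ω, Filter.liminf (fun n => ENNReal.ofReal (Zn n ω)) Filter.atTop ∂P := by
        refine lintegral_congr fun ω => ?_
        exact (((ENNReal.continuous_ofReal.tendsto _).comp (hconv ω)).liminf_eq).symm
    _ ≤ Filter.liminf (fun n => ∫⁻ ω, ENNReal.ofReal (Zn n ω) ∂P) Filter.atTop :=
        lintegral_liminf_le fun n => (hZmeas n).ennreal_ofReal
    _ = Filter.liminf (fun _ : ℕ => ENNReal.ofReal S) Filter.atTop := by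
        refine Filter.liminf_congr (Filter.Eventually.of_forall fun n => ?_)
        rw [← ofReal_integral_eq_lintegral_ofReal (hZint n)
          (Filter.Eventually.of_forall fun ω => hZnn n ω), hZval n]
    _ = ENNReal.ofReal S := Filter.liminf_const _

end AuxSL

theorem stmt_17 {Ω : Type*} {mΩ : MeasurableSpace Ω} (P : Measure Ω)
    [IsProbabilityMeasure P] (F : Filtration ℝ mΩ) (W : ℝ → Ω → ℝ)
    (hW : IsBrownianMotion P F W)
    (r δ σ K γ T : ℝ) (hr : 0 < r) (hδ : 0 ≤ δ) (hσ : 0 < σ) (hK : 0 < K)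
    (hT : 0 < T) (hrγ : r < γ) :
    ∀ S : ℝ, 0 < S → ∀ t ∈ Set.Icc (0:ℝ) T, ∀ I : ℝ, K * Real.exp (γ * t) ≤ I →
      V4 P F W r δ σ K γ T S I t = S + I - K * Real.exp (γ * t)  := by
  intro S hS t htmem I hI
  obtain ⟨ht0, htT⟩ := htmem
  set B := S + I - K * Real.exp (γ * t) with hB
  have hC : 0 ≤ I - K * Real.exp (γ * t) := sub_nonneg.2 hI
  have hBpos : 0 < B := by
    rw [hB]; linarith
  have hub : ∀ x ∈ {x | ∃ τ : Ω → ℝ, IsStoppingTime F (fun ω => (τ ω : WithTop ℝ)) ∧ (∀ ω, τ ω ∈ Set.Icc t T) ∧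
      x = payoff4 P W r δ σ K γ S I t τ}, x ≤ B := by
    rintro x ⟨τ, hτ, hmem, rfl⟩
    set f : Ω → ℝ := fun ω => Real.exp (-(r * (τ ω - t))) *
      max (stockPrice W r δ σ S t (τ ω) ω + divAccount W r δ σ S I t (τ ω) ω
        - K * Real.exp (γ * τ ω)) 0 with hf
    have hpay : payoff4 P W r δ σ K γ S I t τ = ∫ ω, f ω ∂P := rfl
    have hfnn : ∀ ω, 0 ≤ f ω := fun ω =>
      mul_nonneg (Real.exp_pos _).le (le_max_right _ _)
    set Y : Ω → ℝ := fun ω => aDv W δ σ S t (τ ω) ω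
      + ∫ s in t..τ ω, δ * aDv W δ σ S t s ω with hY
    have hYnn : ∀ ω, 0 ≤ Y ω := by
      intro ω
      have h1 := aDv_pos (W := W) hS δ σ t (τ ω) ω
      have h2 : 0 ≤ ∫ s in t..τ ω, δ * aDv W δ σ S t s ω :=
        intervalIntegral.integral_nonneg (hmem ω).1
          (fun s _ => mul_nonneg hδ (aDv_pos (W := W) hS δ σ t s ω).le)
      simp only [hY]
      linarith
    have hfg : ∀ ω, f ω ≤ Y ω + (I - K * Real.exp (γ * t)) := by
      intro ω
      obtain ⟨h1, _⟩ := hmem ω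
      have ha := aDv_eq (W := W) r δ σ S t (τ ω) ω
      have hb : Real.exp (-(r * (τ ω - t))) * divAccount W r δ σ S I t (τ ω) ω
          = I + ∫ s in t..τ ω, δ * aDv W δ σ S t s ω := by
        rw [divAccount, mul_add]
        congr 1
        · rw [← mul_assoc, mul_comm (Real.exp (-(r * (τ ω - t)))) I, mul_assoc, ← Real.exp_add,
            neg_add_cancel, Real.exp_zero, mul_one]
        · rw [← intervalIntegral.integral_const_mul]
          refine intervalIntegral.integral_congr fun s _ => ?_
          have he : Real.exp (-(r * (τ ω - t))) * Real.exp (r * (τ ω - s))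
              = Real.exp (-(r * (s - t))) := by
            rw [← Real.exp_add]; exact congrArg Real.exp (by ring)
          calc Real.exp (-(r * (τ ω - t)))
                * (δ * Real.exp (r * (τ ω - s)) * stockPrice W r δ σ S t s ω)
              = δ * (Real.exp (-(r * (τ ω - t))) * Real.exp (r * (τ ω - s))
                  * stockPrice W r δ σ S t s ω) := by ring
            _ = δ * (Real.exp (-(r * (s - t))) * stockPrice W r δ σ S t s ω) := by
                rw [he]
            _ = δ * aDv W δ σ S t s ω := by rw [aDv_eq]
      have hc : K * Real.exp (γ * t) ≤ Real.exp (-(r * (τ ω - t))) * (K * Real.exp (γ * τ ω)) := by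
        rw [mul_left_comm, ← Real.exp_add]
        refine mul_le_mul_of_nonneg_left (Real.exp_le_exp.2 ?_) hK.le
        nlinarith [mul_nonneg (sub_nonneg.2 hrγ.le) (sub_nonneg.2 h1)]
      simp only [hf]
      rw [mul_max_of_nonneg _ _ (Real.exp_pos _).le, mul_zero]
      refine max_le ?_ (by linarith [hYnn ω])
      calc Real.exp (-(r * (τ ω - t))) * (stockPrice W r δ σ S t (τ ω) ω
            + divAccount W r δ σ S I t (τ ω) ω - K * Real.exp (γ * τ ω))
          = Real.exp (-(r * (τ ω - t))) * stockPrice W r δ σ S t (τ ω) ω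
            + Real.exp (-(r * (τ ω - t))) * divAccount W r δ σ S I t (τ ω) ω
            - Real.exp (-(r * (τ ω - t))) * (K * Real.exp (γ * τ ω)) := by ring
        _ ≤ aDv W δ σ S t (τ ω) ω + (I + ∫ s in t..τ ω, δ * aDv W δ σ S t s ω)
            - K * Real.exp (γ * t) := by
            rw [ha, hb]; linarith [hc]
        _ = Y ω + (I - K * Real.exp (γ * t)) := by simp only [hY]; ring
    have hkey := key_bound hW ht0 htT δ σ hδ hS hτ hmem
    have hlint : ∫⁻ ω, ENNReal.ofReal (f ω) ∂P ≤ ENNReal.ofReal B := by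
      have h1 : ∀ ω, ENNReal.ofReal (f ω)
          ≤ ENNReal.ofReal (Y ω) + ENNReal.ofReal (I - K * Real.exp (γ * t)) := fun ω =>
        le_trans (ENNReal.ofReal_le_ofReal (hfg ω)) ENNReal.ofReal_add_le
      calc ∫⁻ ω, ENNReal.ofReal (f ω) ∂P
          ≤ ∫⁻ ω, (ENNReal.ofReal (Y ω) + ENNReal.ofReal (I - K * Real.exp (γ * t))) ∂P :=
            lintegral_mono h1
        _ = (∫⁻ ω, ENNReal.ofReal (Y ω) ∂P) + ENNReal.ofReal (I - K * Real.exp (γ * t)) := by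
            rw [lintegral_add_right _ measurable_const, lintegral_const, measure_univ, mul_one]
        _ ≤ ENNReal.ofReal S + ENNReal.ofReal (I - K * Real.exp (γ * t)) :=
            add_le_add_left hkey _
        _ = ENNReal.ofReal B := by
            rw [← ENNReal.ofReal_add hS.le hC]
            exact congrArg ENNReal.ofReal (by rw [hB]; ring)
    rw [hpay]
    by_cases hint : Integrable f P
    · rw [integral_eq_lintegral_of_nonneg_ae (ae_of_all _ hfnn) hint.aestronglyMeasurable]
      exact ENNReal.toReal_le_of_le_ofReal hBpos.le hlint
    · rw [integral_undef hint]
      exact hBpos.le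
  have hmemB : B ∈ {x | ∃ τ : Ω → ℝ, IsStoppingTime F (fun ω => (τ ω : WithTop ℝ)) ∧ (∀ ω, τ ω ∈ Set.Icc t T) ∧
      x = payoff4 P W r δ σ K γ S I t τ} := by
    refine ⟨fun _ => t, isStoppingTime_const F t, fun ω => ⟨le_refl t, htT⟩, ?_⟩
    rw [payoff4]
    have hptw : ∀ ω : Ω, Real.exp (-(r * (t - t))) *
        max (stockPrice W r δ σ S t t ω + divAccount W r δ σ S I t t ω
          - K * Real.exp (γ * t)) 0 = B := by
      intro ω
      have h1 : stockPrice W r δ σ S t t ω = S := by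
        simp [stockPrice]
      have h2 : divAccount W r δ σ S I t t ω = I := by
        simp [divAccount]
      rw [h1, h2, sub_self, mul_zero, neg_zero, Real.exp_zero, one_mul,
        max_eq_left (by linarith [hBpos])]
    rw [integral_congr_ae (ae_of_all _ hptw), integral_const, probReal_univ,
      one_smul]
  rw [V4]
  exact le_antisymm (csSup_le ⟨B, hmemB⟩ hub) (le_csSup ⟨B, hub⟩ hmemB)
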